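/- Let m ≥ 1 be an integer. (i) If A₁, A₂ ∈ SL(2,ℝ) and δ₁, δ₂ : ℍ → ℂ are holomorphic with δᵢ(z)^m · (denom Aᵢ z)² = 1 for all z ∈ ℍ (i = 1,2), then the function z ↦ δ₂(A₁ • z) · δ₁(z) is holomorphic and satisfies (δ₂(A₁ • z) · δ₁(z))^m · (denom (A₂ * A₁) z)² = 1 for all z ∈ ℍ. (ii) If A ∈ SL(2,ℝ) and δ : ℍ → ℂ is holomorphic with δ(z)^m · (denom A z)² = 1 for all z, then the function z ↦ (δ(A⁻¹ • z))⁻¹ is holomorphic and satisfies ((δ(A⁻¹ • z))⁻¹)^m · (denom A⁻¹ z)² = 1 for all z. Consequently the set of such pairs (A, δ) is a group under the multiplication (A₂, δ₂)·(A₁, δ₁) = (A₂A₁, (δ₂ ∘ (A₁ • ·)) · δ₁), with identity (1, const 1). (Proposition 2.2.) -/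

import Mathlib

open scoped MatrixGroups Manifold UpperHalfPlane

/-- The Möbius cocycle `denom A z = c z + d` for `A = [[a,b],[c,d]] ∈ SL(2,ℝ)` and `z ∈ ℍ`. -/
noncomputable def mdenom (A : Matrix.SpecialLinearGroup (Fin 2) ℝ) (z : ℍ) : ℂ :=
  ((A 1 0 : ℝ) : ℂ) * (z : ℂ) + ((A 1 1 : ℝ) : ℂ)

/-- `δ : ℍ → ℂ` is holomorphic. -/
def Holo (δ : ℍ → ℂ) : Prop := MDifferentiable 𝓘(ℂ) 𝓘(ℂ) δ

/-- The cocycle condition `δ(z)^m · (denom A z)² = 1` for all `z ∈ ℍ`. -/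
def Cocycle (m : ℕ) (A : Matrix.SpecialLinearGroup (Fin 2) ℝ) (δ : ℍ → ℂ) : Prop :=
  ∀ z : ℍ, δ z ^ m * (mdenom A z) ^ 2 = 1

/-- The set of pairs `(A, δ)` with `δ` holomorphic and `δ(z)^m · (denom A z)² = 1`:
the paper's model of the `m`-fold covering group `G_m` of `PSL(2,ℝ)`. -/
def SpinPair (m : ℕ) : Type :=
  {p : Matrix.SpecialLinearGroup (Fin 2) ℝ × (ℍ → ℂ) // Holo p.2 ∧ Cocycle m p.1 p.2}

/-- The multiplication of a group structure `G` on `X`. -/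
def mulOf {X : Type*} (G : Group X) (x y : X) : X := letI := G; x * y

/-- The identity element of a group structure `G` on `X`. -/
def oneOf {X : Type*} (G : Group X) : X := letI := G; 1

section aux
open UpperHalfPlane
set_option synthInstance.maxHeartbeats 400000
set_option maxHeartbeats 1000000

lemma mdenom_eq (A : SL(2,ℝ)) (z : ℍ) : mdenom A z = denom (A : GL(2,ℝ)⁺) z := by
  simp [mdenom, denom]

lemma mdenom_cocycle (A B : SL(2,ℝ)) (z : ℍ) :
    mdenom (A * B) z = mdenom A (B • z) * mdenom B z := by
  have h : denom ((A : GL(2,ℝ)⁺) * (B : GL(2,ℝ)⁺) : GL(2,ℝ)⁺) z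
      = denom (A : GL(2,ℝ)⁺) ((B • z : ℍ) : ℂ) * denom (B : GL(2,ℝ)⁺) z := by
    rw [Subgroup.coe_mul, denom_cocycle _ _ z.im_ne_zero, coe_specialLinearGroup_apply]
    simp [num, denom]
  rw [mdenom_eq, mdenom_eq, mdenom_eq]
  rw [map_mul]
  exact h

lemma mdenom_one (z : ℍ) : mdenom 1 z = 1 :=
  by rw [mdenom_eq, map_one]; exact denom_one z

lemma mdenom_ne_zero (A : SL(2,ℝ)) (z : ℍ) : mdenom A z ≠ 0 := by
  rw [mdenom_eq]; exact denom_ne_zero _ z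

lemma mdiffAt_inv {f : ℍ → ℂ} {τ : ℍ} (hf : MDifferentiableAt 𝓘(ℂ) 𝓘(ℂ) f τ)
    (h0 : f τ ≠ 0) : MDifferentiableAt 𝓘(ℂ) 𝓘(ℂ) (fun z => (f z)⁻¹) τ := by
  have h1 : MDifferentiableAt 𝓘(ℂ) 𝓘(ℂ) (fun w : ℂ => w⁻¹) (f τ) :=
    mdifferentiableAt_iff_differentiableAt.2 (differentiableAt_inv h0)
  exact h1.comp τ hf

lemma mdiff_num_denom (A : SL(2,ℝ)) :
    MDifferentiable 𝓘(ℂ) 𝓘(ℂ) (fun z : ℍ => ((A • z : ℍ) : ℂ)) := by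
  have h : (fun z : ℍ => ((A • z : ℍ) : ℂ))
      = fun z : ℍ => num (A : GL(2,ℝ)⁺) z * (denom (A : GL(2,ℝ)⁺) z)⁻¹ := by
    funext z
    rw [coe_specialLinearGroup_apply]
    exact div_eq_mul_inv _ _
  rw [h]
  intro z
  have hden : MDifferentiableAt 𝓘(ℂ) 𝓘(ℂ) (fun z : ℍ => denom (A : GL(2,ℝ)⁺) z) z :=
    (mdifferentiableAt_const.mul (mdifferentiable_coe z)).add mdifferentiableAt_const
  exact ((mdifferentiableAt_const.mul (mdifferentiable_coe z)).add
      mdifferentiableAt_const).mul (mdiffAt_inv hden (denom_ne_zero _ z))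

lemma mdiff_smul (A : SL(2,ℝ)) : MDifferentiable 𝓘(ℂ) 𝓘(ℂ) (fun z : ℍ => A • z) := by
  intro τ
  have h2 : MDifferentiableAt 𝓘(ℂ) 𝓘(ℂ) ofComplex ((A • τ : ℍ) : ℂ) :=
    mdifferentiableAt_ofComplex (by simpa using (A • τ).im_pos)
  have h3 := h2.comp τ (mdiff_num_denom A τ)
  have h : (fun z : ℍ => A • z) = fun z : ℍ => ofComplex ((A • z : ℍ) : ℂ) := by
    funext z; simp [ofComplex_apply]
  rw [h]
  exact h3

lemma cocycle_ne_zero {m : ℕ} (hm : 1 ≤ m) {A : SL(2,ℝ)} {δ : ℍ → ℂ}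
    (hc : Cocycle m A δ) (z : ℍ) : δ z ≠ 0 := by
  intro h
  have := hc z
  rw [h, zero_pow (by omega), zero_mul] at this
  exact zero_ne_one this

lemma holo_mul_closure (A₁ : SL(2,ℝ)) {δ₁ δ₂ : ℍ → ℂ}
    (h₁ : Holo δ₁) (h₂ : Holo δ₂) : Holo (fun z => δ₂ (A₁ • z) * δ₁ z) := by
  intro z
  exact ((h₂ _).comp z (mdiff_smul A₁ z)).mul (h₁ z)

lemma cocycle_mul_closure {m : ℕ} (A₁ A₂ : SL(2,ℝ)) {δ₁ δ₂ : ℍ → ℂ}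
    (h₁ : Cocycle m A₁ δ₁) (h₂ : Cocycle m A₂ δ₂) :
    Cocycle m (A₂ * A₁) (fun z => δ₂ (A₁ • z) * δ₁ z) := by
  intro z
  calc (δ₂ (A₁ • z) * δ₁ z) ^ m * mdenom (A₂ * A₁) z ^ 2
      = (δ₂ (A₁ • z) ^ m * mdenom A₂ (A₁ • z) ^ 2) * (δ₁ z ^ m * mdenom A₁ z ^ 2) := by
        rw [mdenom_cocycle]; ring
    _ = 1 := by rw [h₂, h₁, one_mul]

lemma holo_inv_closure {m : ℕ} (hm : 1 ≤ m) (A : SL(2,ℝ)) {δ : ℍ → ℂ}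
    (hδ : Holo δ) (hc : Cocycle m A δ) : Holo (fun z => (δ (A⁻¹ • z))⁻¹) := by
  intro z
  exact mdiffAt_inv ((hδ _).comp z (mdiff_smul A⁻¹ z)) (cocycle_ne_zero hm hc _)

lemma cocycle_inv_closure {m : ℕ} (A : SL(2,ℝ)) {δ : ℍ → ℂ}
    (hc : Cocycle m A δ) : Cocycle m A⁻¹ (fun z => (δ (A⁻¹ • z))⁻¹) := by
  intro z
  have h2 : mdenom A (A⁻¹ • z) * mdenom A⁻¹ z = 1 := by
    rw [← mdenom_cocycle, mul_inv_cancel, mdenom_one]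
  have hinv : mdenom A⁻¹ z = (mdenom A (A⁻¹ • z))⁻¹ := (inv_eq_of_mul_eq_one_right h2).symm
  rw [hinv, inv_pow, inv_pow, ← mul_inv, hc, inv_one]

/-- The group structure on `SpinPair m`. -/
noncomputable def spinPairGroup (m : ℕ) (hm : 1 ≤ m) : Group (SpinPair m) where
  mul x y := ⟨(x.val.1 * y.val.1, fun z => x.val.2 (y.val.1 • z) * y.val.2 z),
    holo_mul_closure y.val.1 y.prop.1 x.prop.1,
    cocycle_mul_closure y.val.1 x.val.1 y.prop.2 x.prop.2⟩
  one := ⟨(1, fun _ => 1), fun _ => mdifferentiableAt_const,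
    fun z => by rw [one_pow, mdenom_one, one_pow, one_mul]⟩
  inv x := ⟨(x.val.1⁻¹, fun z => (x.val.2 (x.val.1⁻¹ • z))⁻¹),
    holo_inv_closure hm x.val.1 x.prop.1 x.prop.2,
    cocycle_inv_closure x.val.1 x.prop.2⟩
  mul_assoc a b c := by
    apply Subtype.ext
    apply Prod.ext
    · exact mul_assoc _ _ _
    · funext w
      show a.val.2 (b.val.1 • c.val.1 • w) * b.val.2 (c.val.1 • w) * c.val.2 w
        = a.val.2 ((b.val.1 * c.val.1) • w) * (b.val.2 (c.val.1 • w) * c.val.2 w)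
      rw [mul_smul, mul_assoc]
  one_mul a := by
    apply Subtype.ext
    apply Prod.ext
    · exact one_mul _
    · funext w
      show (1 : ℂ) * a.val.2 w = a.val.2 w
      exact one_mul _
  mul_one a := by
    apply Subtype.ext
    apply Prod.ext
    · exact mul_one _
    · funext w
      show a.val.2 ((1 : SL(2,ℝ)) • w) * 1 = a.val.2 w
      rw [one_smul, mul_one]
  inv_mul_cancel a := by
    apply Subtype.ext
    apply Prod.ext
    · exact inv_mul_cancel _
    · funext w
      show (a.val.2 (a.val.1⁻¹ • a.val.1 • w))⁻¹ * a.val.2 w = 1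
      rw [inv_smul_smul]
      exact inv_mul_cancel₀ (cocycle_ne_zero hm a.prop.2 w)

end aux

/-- (i) closure of the cocycle pairs under multiplication, (ii) closure under inversion, and
consequently the set of such pairs is a group with the multiplication
`(A₂, δ₂)·(A₁, δ₁) = (A₂A₁, (δ₂ ∘ (A₁ • ·)) · δ₁)` and identity `(1, const 1)`. -/
theorem covering_group_structure (m : ℕ) (hm : 1 ≤ m) :
    (∀ (A₁ A₂ : Matrix.SpecialLinearGroup (Fin 2) ℝ) (δ₁ δ₂ : ℍ → ℂ),
        Holo δ₁ → Holo δ₂ → Cocycle m A₁ δ₁ → Cocycle m A₂ δ₂ →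
        Holo (fun z => δ₂ (A₁ • z) * δ₁ z) ∧
          Cocycle m (A₂ * A₁) (fun z => δ₂ (A₁ • z) * δ₁ z)) ∧
    (∀ (A : Matrix.SpecialLinearGroup (Fin 2) ℝ) (δ : ℍ → ℂ),
        Holo δ → Cocycle m A δ →
        Holo (fun z => (δ (A⁻¹ • z))⁻¹) ∧ Cocycle m A⁻¹ (fun z => (δ (A⁻¹ • z))⁻¹)) ∧
    (∃ G : Group (SpinPair m),
      (∀ x y : SpinPair m,
        (mulOf G x y).val
          = (x.val.1 * y.val.1, fun z => x.val.2 (y.val.1 • z) * y.val.2 z)) ∧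
      (oneOf G).val = ((1 : Matrix.SpecialLinearGroup (Fin 2) ℝ), fun _ => (1 : ℂ))) := by
  refine ⟨?_, ?_, ?_⟩
  · intro A₁ A₂ δ₁ δ₂ h₁ h₂ hc₁ hc₂
    exact ⟨holo_mul_closure A₁ h₁ h₂, cocycle_mul_closure A₁ A₂ hc₁ hc₂⟩
  · intro A δ hδ hc
    exact ⟨holo_inv_closure hm A hδ hc, cocycle_inv_closure A hc⟩
  · exact ⟨spinPairGroup m hm, fun x y => rfl, rfl⟩
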